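/- arXiv:2312.05418 — 6 statements merged into one kernel-verified Lean document; each statement's English description precedes it below -/
import Mathlib

section
/- Let A, Q be d×d complex matrices with Q Hermitian and invertible, and suppose X is an invertible d×d matrix satisfying the modified nonlinear matrix equation X = Q + A*X⁻¹A, such that Y := X + AQ⁻¹A* is invertible. Set B = AQ⁻¹A and R = Q + A*Q⁻¹A + AQ⁻¹A*. Then Y satisfies the standard nonlinear matrix equation Y = R − B*Y⁻¹B; equivalently, the solution X of the modified NME can be recovered from the solution Y of the standard NME by X = Y − AQ⁻¹A*. -/
open Matrix

/-- Reduction of the modified NME `X = Q + A* X⁻¹ A` to the standard NME: with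
`Y = X + A Q⁻¹ A*`, `B = A Q⁻¹ A` and `R = Q + A* Q⁻¹ A + A Q⁻¹ A*`, the matrix
`Y` satisfies `Y = R - B* Y⁻¹ B`, and `X = Y - A Q⁻¹ A*`. -/
theorem modified_nme_reduction (d : ℕ) (A Q X : Matrix (Fin d) (Fin d) ℂ)
    (hQh : Q.IsHermitian) (hQ : IsUnit Q.det) (hX : IsUnit X.det)
    (heq : X = Q + Aᴴ * X⁻¹ * A)
    (hY : IsUnit (X + A * Q⁻¹ * Aᴴ).det) :
    (X + A * Q⁻¹ * Aᴴ) =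
        (Q + Aᴴ * Q⁻¹ * A + A * Q⁻¹ * Aᴴ)
          - (A * Q⁻¹ * A)ᴴ * (X + A * Q⁻¹ * Aᴴ)⁻¹ * (A * Q⁻¹ * A) ∧
    X = (X + A * Q⁻¹ * Aᴴ) - A * Q⁻¹ * Aᴴ := by
  set Y := X + A * Q⁻¹ * Aᴴ with hYdef
  have hQi : Q⁻¹ᴴ = Q⁻¹ := hQh.inv.eq
  have hQQ : Q⁻¹ * Q = 1 := nonsing_inv_mul Q hQ
  have hQQ' : Q * Q⁻¹ = 1 := mul_nonsing_inv Q hQ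
  have hXX : X * X⁻¹ = 1 := mul_nonsing_inv X hX
  have hXX' : X⁻¹ * X = 1 := nonsing_inv_mul X hX
  have hYY : Y⁻¹ * Y = 1 := nonsing_inv_mul Y hY
  -- key: Y⁻¹ * A * Q⁻¹ * Aᴴ * X⁻¹ = X⁻¹ - Y⁻¹
  have key : Y⁻¹ * (A * Q⁻¹ * Aᴴ) * X⁻¹ = X⁻¹ - Y⁻¹ := by
    have : Y⁻¹ * Y * X⁻¹ = X⁻¹ := by rw [hYY, one_mul]
    rw [hYdef] at this
    calc Y⁻¹ * (A * Q⁻¹ * Aᴴ) * X⁻¹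
        = Y⁻¹ * (X + A * Q⁻¹ * Aᴴ) * X⁻¹ - Y⁻¹ * X * X⁻¹ := by
          simp [mul_add, add_mul, mul_sub, sub_mul, mul_assoc]
      _ = X⁻¹ - Y⁻¹ := by rw [this, mul_assoc, hXX, mul_one]
  -- M = Q⁻¹ - Q⁻¹ Aᴴ Y⁻¹ A Q⁻¹ is a left inverse of X
  have hMX : (Q⁻¹ - Q⁻¹ * Aᴴ * Y⁻¹ * A * Q⁻¹) * X = 1 := by
    nth_rewrite 1 [heq]
    have h1 : Q⁻¹ * (Q + Aᴴ * X⁻¹ * A) = 1 + Q⁻¹ * Aᴴ * X⁻¹ * A := by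
      simp [mul_add, ← mul_assoc, hQQ]
    have h2 : Q⁻¹ * Aᴴ * Y⁻¹ * A * Q⁻¹ * (Q + Aᴴ * X⁻¹ * A)
        = Q⁻¹ * Aᴴ * Y⁻¹ * A + Q⁻¹ * Aᴴ * (Y⁻¹ * (A * Q⁻¹ * Aᴴ) * X⁻¹) * A := by
      simp [mul_add, mul_assoc, hQQ]
    rw [sub_mul, h1, h2, key]
    noncomm_ring
  have hXinv : X⁻¹ = Q⁻¹ - Q⁻¹ * Aᴴ * Y⁻¹ * A * Q⁻¹ := inv_eq_left_inv hMX
  constructor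
  · rw [hXinv] at heq
    conv_lhs => rw [hYdef, heq]
    simp only [conjTranspose_mul, hQi, conjTranspose_conjTranspose]
    noncomm_ring
  · rw [add_sub_cancel_right]
end

section
/- Let P₀ = [[6,22],[22,84]] and P₁ = [[2,7],[11,38]] (real 2×2 matrices). Then X = [[1,5],[5,26]] is positive definite and satisfies the nonlinear matrix equation X = P₀ − P₁ᵀX⁻¹P₁, and the matrices H₀ = [[1,0],[5,1]], H₁ = [[2,1],[7,3]] satisfy the spectral factorization identities H₀H₀ᵀ + H₁H₁ᵀ = P₀ and H₀H₁ᵀ = P₁. -/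
open Matrix

/-- Ephremidze's singular example: `X = [[1,5],[5,26]]` is positive definite,
solves the NME `X = P₀ − P₁ᵀ X⁻¹ P₁`, and `H₀ = [[1,0],[5,1]]`,
`H₁ = [[2,1],[7,3]]` give the spectral factorization of `P(z)`. -/
theorem ephremidze_example
    (P₀ P₁ X H₀ H₁ : Matrix (Fin 2) (Fin 2) ℝ)
    (hP₀ : P₀ = !![6, 22; 22, 84])
    (hP₁ : P₁ = !![2, 7; 11, 38])
    (hX : X = !![1, 5; 5, 26])
    (hH₀ : H₀ = !![1, 0; 5, 1])
    (hH₁ : H₁ = !![2, 1; 7, 3]) :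
    X.PosDef ∧ X = P₀ - P₁ᵀ * X⁻¹ * P₁ ∧
    H₀ * H₀ᵀ + H₁ * H₁ᵀ = P₀ ∧ H₀ * H₁ᵀ = P₁ := by
  subst hP₀ hP₁ hX hH₀ hH₁
  have hinv : (!![1, 5; 5, 26] : Matrix (Fin 2) (Fin 2) ℝ)⁻¹ = !![26, -5; -5, 1] := by
    apply Matrix.inv_eq_left_inv
    norm_num [Matrix.mul_fin_two]
    exact (Matrix.one_fin_two).symm
  have t1 : (!![1, 5; 5, 26] : Matrix (Fin 2) (Fin 2) ℝ)ᵀ = !![1, 5; 5, 26] := by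
    ext i j; fin_cases i <;> fin_cases j <;> rfl
  have t2 : (!![2, 7; 11, 38] : Matrix (Fin 2) (Fin 2) ℝ)ᵀ = !![2, 11; 7, 38] := by
    ext i j; fin_cases i <;> fin_cases j <;> rfl
  have t3 : (!![1, 0; 5, 1] : Matrix (Fin 2) (Fin 2) ℝ)ᵀ = !![1, 5; 0, 1] := by
    ext i j; fin_cases i <;> fin_cases j <;> rfl
  have t4 : (!![2, 1; 7, 3] : Matrix (Fin 2) (Fin 2) ℝ)ᵀ = !![2, 7; 1, 3] := by
    ext i j; fin_cases i <;> fin_cases j <;> rfl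
  refine ⟨Matrix.posDef_iff_dotProduct_mulVec.mpr ⟨?_, ?_⟩, ?_, ?_, ?_⟩
  · ext i j
    fin_cases i <;> fin_cases j <;>
      simp [Matrix.conjTranspose, t1]
  · intro x hx
    have h : (star x) ⬝ᵥ ((!![1, 5; 5, 26] : Matrix (Fin 2) (Fin 2) ℝ) *ᵥ x)
        = (x 0 + 5 * x 1) ^ 2 + (x 1) ^ 2 := by
      simp [dotProduct, Matrix.mulVec, Fin.sum_univ_two]
      ring
    rw [h]
    rcases eq_or_ne (x 1) 0 with h1 | h1
    · have h0 : x 0 ≠ 0 := by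
        intro h0
        apply hx
        ext i; fin_cases i <;> simp [h0, h1]
      have : x 0 + 5 * x 1 ≠ 0 := by rw [h1]; simpa using h0
      positivity
    · positivity
  · rw [hinv, t2]
    ext i j
    fin_cases i <;> fin_cases j <;>
      simp [Matrix.mul_apply, Matrix.transpose_apply, Fin.sum_univ_two] <;> norm_num
  · rw [t3, t4]
    ext i j
    fin_cases i <;> fin_cases j <;>
      simp [Matrix.mul_apply, Fin.sum_univ_two] <;> norm_num
  · rw [t4]
    ext i j
    fin_cases i <;> fin_cases j <;>
      simp [Matrix.mul_apply, Fin.sum_univ_two] <;> norm_num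
end

section
/- Let P₀ = [[1,0],[0,1]] and P₁ = (1/8)·[[4,−(1+√7)],[1+√7,−√7]] (real 2×2 matrices). Then X = (1/8)·[[4,√7+1],[√7+1,4]] is positive definite and satisfies the nonlinear matrix equation X = P₀ − P₁ᵀX⁻¹P₁, and the matrices H₀ = (√2/8)·[[4,0],[√7+1,√7−1]], H₁ = (√2/8)·[[4,0],[−(√7+1),√7−1]] satisfy the spectral factorization identities H₀H₀ᵀ + H₁H₁ᵀ = P₀ and H₀H₁ᵀ = P₁. -/
open Matrix

set_option maxHeartbeats 1600000 in
/-- The Chui–Lian product filter: `X = (1/8)·[[4,√7+1],[√7+1,4]]` is positive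
definite, solves the NME `X = P₀ − P₁ᵀ X⁻¹ P₁`, and `H₀`, `H₁` give the
spectral factorization (the new supercompact multiscaling function). -/
theorem chui_lian_example
    (P₀ P₁ X H₀ H₁ : Matrix (Fin 2) (Fin 2) ℝ)
    (hP₀ : P₀ = !![1, 0; 0, 1])
    (hP₁ : P₁ = (1 / 8 : ℝ) •
      !![4, -(1 + Real.sqrt 7); 1 + Real.sqrt 7, -Real.sqrt 7])
    (hX : X = (1 / 8 : ℝ) •
      !![4, Real.sqrt 7 + 1; Real.sqrt 7 + 1, 4])
    (hH₀ : H₀ = (Real.sqrt 2 / 8) •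
      !![4, 0; Real.sqrt 7 + 1, Real.sqrt 7 - 1])
    (hH₁ : H₁ = (Real.sqrt 2 / 8) •
      !![4, 0; -(Real.sqrt 7 + 1), Real.sqrt 7 - 1]) :
    X.PosDef ∧ X = P₀ - P₁ᵀ * X⁻¹ * P₁ ∧
    H₀ * H₀ᵀ + H₁ * H₁ᵀ = P₀ ∧ H₀ * H₁ᵀ = P₁ := by
  have hs : Real.sqrt 7 * Real.sqrt 7 = 7 := Real.mul_self_sqrt (by norm_num)
  have ht : Real.sqrt 2 * Real.sqrt 2 = 2 := Real.mul_self_sqrt (by norm_num)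
  have hs0 : (0:ℝ) < Real.sqrt 7 := Real.sqrt_pos.2 (by norm_num)
  have hs3 : Real.sqrt 7 < 3 := by nlinarith
  have hd : (8 - 2 * Real.sqrt 7 : ℝ) ≠ 0 := by nlinarith
  have hinv : X⁻¹ = (8 / (8 - 2 * Real.sqrt 7)) •
      !![4, -(Real.sqrt 7 + 1); -(Real.sqrt 7 + 1), 4] := by
    apply inv_eq_right_inv
    subst hX
    have hd' : (8 - Real.sqrt 7 * 2 : ℝ) ≠ 0 := by nlinarith
    ext i j
    fin_cases i <;> fin_cases j <;>
      simp [Matrix.mul_apply, Matrix.transpose_apply, Matrix.vecHead, Matrix.vecTail,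
        Fin.sum_univ_two] <;>
      field_simp <;> nlinarith [hs]
  refine ⟨?_, ?_, ?_, ?_⟩
  · rw [Matrix.posDef_iff_dotProduct_mulVec]
    constructor
    · subst hX
      ext i j
      fin_cases i <;> fin_cases j <;>
        simp [Matrix.conjTranspose, Matrix.transpose_apply, Matrix.vecHead, Matrix.vecTail]
    · intro x hx
      have hx2 : x 0 ^ 2 + x 1 ^ 2 > 0 := by
        rcases (Function.ne_iff.mp hx) with ⟨i, hi⟩
        fin_cases i
        · have : x 0 ≠ 0 := hi
          positivity
        · have : x 1 ≠ 0 := hi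
          positivity
      subst hX
      simp [dotProduct, Matrix.mulVec, Fin.sum_univ_two, Matrix.vecHead, Matrix.vecTail]
      nlinarith [sq_nonneg (x 0 + x 1), hx2, hs3, hs0]
  · rw [hinv]
    have hd' : (8 - Real.sqrt 7 * 2 : ℝ) ≠ 0 := by nlinarith
    subst hX hP₀ hP₁
    ext i j
    fin_cases i <;> fin_cases j <;>
      simp [Matrix.mul_apply, Matrix.transpose_apply, Matrix.vecHead, Matrix.vecTail,
        Fin.sum_univ_two] <;>
      field_simp <;> nlinarith [hs]
  · subst hP₀ hH₀ hH₁
    ext i j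
    fin_cases i <;> fin_cases j <;>
      simp [Matrix.mul_apply, Matrix.transpose_apply, Matrix.vecHead, Matrix.vecTail,
        Fin.sum_univ_two, Matrix.vecMul, dotProduct] <;> nlinarith [hs, ht]
  · subst hP₁ hH₀ hH₁
    ext i j
    fin_cases i <;> fin_cases j <;>
      simp [Matrix.mul_apply, Matrix.transpose_apply, Matrix.vecHead, Matrix.vecTail,
        Fin.sum_univ_two]
    · linear_combination (1/4) * ht
    · linear_combination ((-1 - Real.sqrt 7)/16) * ht
    · linear_combination ((Real.sqrt 7 + 1)/16) * ht
    · linear_combination (-(Real.sqrt 7)/16) * ht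
end

section
/- Let P₀ = [[1,0],[0,1]] and P₁ = (1/4)·[[2,−√3],[√3,−1]] (real 2×2 matrices). Then X = (1/4)·[[2,√3],[√3,2]] is positive definite and satisfies the nonlinear matrix equation X = P₀ − P₁ᵀX⁻¹P₁, and the matrices H₀ = (√2/4)·[[2,0],[√3,1]], H₁ = (√2/4)·[[2,0],[−√3,1]] satisfy the spectral factorization identities H₀H₀ᵀ + H₁H₁ᵀ = P₀ and H₀H₁ᵀ = P₁. -/
set_option maxHeartbeats 1000000


open Matrix

/-- The Legendre multiscaling function of order 2: `X = (1/4)·[[2,√3],[√3,2]]`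
is positive definite, solves the NME `X = P₀ − P₁ᵀ X⁻¹ P₁`, and `H₀`, `H₁`
give the spectral factorization. -/
theorem legendre_order_two_example
    (P₀ P₁ X H₀ H₁ : Matrix (Fin 2) (Fin 2) ℝ)
    (hP₀ : P₀ = !![1, 0; 0, 1])
    (hP₁ : P₁ = (1 / 4 : ℝ) • !![2, -Real.sqrt 3; Real.sqrt 3, -1])
    (hX : X = (1 / 4 : ℝ) • !![2, Real.sqrt 3; Real.sqrt 3, 2])
    (hH₀ : H₀ = (Real.sqrt 2 / 4) • !![2, 0; Real.sqrt 3, 1])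
    (hH₁ : H₁ = (Real.sqrt 2 / 4) • !![2, 0; -Real.sqrt 3, 1]) :
    X.PosDef ∧ X = P₀ - P₁ᵀ * X⁻¹ * P₁ ∧
    H₀ * H₀ᵀ + H₁ * H₁ᵀ = P₀ ∧ H₀ * H₁ᵀ = P₁ := by
  have s3 : Real.sqrt 3 ^ 2 = 3 := Real.sq_sqrt (by norm_num)
  have s3n : (0:ℝ) ≤ Real.sqrt 3 := Real.sqrt_nonneg 3
  have s2 : Real.sqrt 2 ^ 2 = 2 := Real.sq_sqrt (by norm_num)
  have hinv : X⁻¹ = !![8, -4*Real.sqrt 3; -4*Real.sqrt 3, 8] := by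
    apply inv_eq_right_inv
    subst hX
    ext i j
    fin_cases i <;> fin_cases j <;>
      simp [Matrix.mul_apply, Fin.sum_univ_two, Matrix.transpose_apply, Matrix.vecHead, Matrix.vecTail, Function.comp] <;> nlinarith [s3]
  refine ⟨?_, ?_, ?_, ?_⟩
  · constructor
    · subst hX
      ext i j
      fin_cases i <;> fin_cases j <;> simp [Matrix.conjTranspose, Matrix.transpose_apply, Matrix.vecHead, Matrix.vecTail]
    · intro x hx
      have hne : x 0 ≠ 0 ∨ x 1 ≠ 0 := by
        by_contra h
        push_neg at h
        exact hx (Finsupp.ext fun i => by fin_cases i <;> simp [h.1, h.2])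
      have hpos : 0 < x 0 ^ 2 + x 1 ^ 2 := by
        rcases hne with h | h <;> positivity
      subst hX
      simp [dotProduct, Matrix.mulVec, Fin.sum_univ_two, Finsupp.sum_fintype]
      nlinarith [sq_nonneg (x 0 + x 1), sq_nonneg (x 0 - x 1),
        sq_nonneg (Real.sqrt 3 * x 0 + x 1), sq_nonneg (Real.sqrt 3 * x 1 + x 0)]
  · rw [hinv]
    subst hX hP₀ hP₁
    ext i j
    fin_cases i <;> fin_cases j <;>
      simp [Matrix.mul_apply, Fin.sum_univ_two, Matrix.transpose_apply, Matrix.vecHead, Matrix.vecTail, Function.comp] <;> nlinarith [s3]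
  · subst hH₀ hH₁ hP₀
    ext i j
    fin_cases i <;> fin_cases j <;>
      simp [Matrix.mul_apply, Fin.sum_univ_two, Matrix.transpose_apply, Matrix.vecHead, Matrix.vecTail, Function.comp, Matrix.vecMul, dotProduct] <;> nlinarith [s3, s2]
  · subst hH₀ hH₁ hP₁
    ext i j
    fin_cases i <;> fin_cases j <;>
      simp [Matrix.mul_apply, Fin.sum_univ_two, Matrix.transpose_apply, Matrix.vecHead, Matrix.vecTail, Function.comp] <;> nlinarith [s3, s2]
end

section
/- Let P₀ be the 5×5 identity matrix and P₁ = (1/256)·[[128, 64√3, 0, −16√7, 0],[−64√3, −64, 16√15, 16√21, −8√3],[0, −16√15, −112, −8√35, 24√5],[16√7, 16√21, 8√35, −40, −39√7],[0, 8√3, 24√5, 39√7, 53]] (real 5×5 matrices). Then X = (1/256)·[[128, −64√3, 0, 16√7, 0],[−64√3, 128, −16√15, 0, 8√3],[0, −16√15, 128, −16√35, 0],[16√7, 0, −16√35, 128, −21√7],[0, 8√3, 0, −21√7, 128]] satisfies the nonlinear matrix equation X = P₀ − P₁ᵀX⁻¹P₁, and the matrices H₀ = (√2/32)·[[16,0,0,0,0],[−8√3,8,0,0,0],[0,−4√15,4,0,0],[2√7,2√21,−2√35,2,0],[0,2√3,6√5,3√7,1]]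 and H₁ = (√2/32)·[[16,0,0,0,0],[8√3,8,0,0,0],[0,4√15,4,0,0],[−2√7,2√21,2√35,2,0],[0,−2√3,6√5,−3√7,1]] satisfy the spectral factorization identities H₀H₀ᵀ + H₁H₁ᵀ = P₀ and H₀H₁ᵀ = P₁. -/
open Matrix
set_option maxHeartbeats 4000000 in

/-- The Legendre multiscaling function of order 5: the 5×5 matrix `X` solves
the NME `X = P₀ − P₁ᵀ X⁻¹ P₁`, and `H₀`, `H₁` give the spectral factorization
`H₀H₀ᵀ + H₁H₁ᵀ = P₀`, `H₀H₁ᵀ = P₁`. -/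
theorem legendre_order_five_example
    (P₀ P₁ X H₀ H₁ : Matrix (Fin 5) (Fin 5) ℝ)
    (hP₀ : P₀ = 1)
    (hP₁ : P₁ = (1 / 256 : ℝ) •
      !![128, 64 * Real.sqrt 3, 0, -16 * Real.sqrt 7, 0;
         -64 * Real.sqrt 3, -64, 16 * Real.sqrt 15, 16 * Real.sqrt 21,
           -8 * Real.sqrt 3;
         0, -16 * Real.sqrt 15, -112, -8 * Real.sqrt 35, 24 * Real.sqrt 5;
         16 * Real.sqrt 7, 16 * Real.sqrt 21, 8 * Real.sqrt 35, -40,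
           -39 * Real.sqrt 7;
         0, 8 * Real.sqrt 3, 24 * Real.sqrt 5, 39 * Real.sqrt 7, 53])
    (hX : X = (1 / 256 : ℝ) •
      !![128, -64 * Real.sqrt 3, 0, 16 * Real.sqrt 7, 0;
         -64 * Real.sqrt 3, 128, -16 * Real.sqrt 15, 0, 8 * Real.sqrt 3;
         0, -16 * Real.sqrt 15, 128, -16 * Real.sqrt 35, 0;
         16 * Real.sqrt 7, 0, -16 * Real.sqrt 35, 128, -21 * Real.sqrt 7;
         0, 8 * Real.sqrt 3, 0, -21 * Real.sqrt 7, 128])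
    (hH₀ : H₀ = (Real.sqrt 2 / 32) •
      !![16, 0, 0, 0, 0;
         -8 * Real.sqrt 3, 8, 0, 0, 0;
         0, -4 * Real.sqrt 15, 4, 0, 0;
         2 * Real.sqrt 7, 2 * Real.sqrt 21, -2 * Real.sqrt 35, 2, 0;
         0, 2 * Real.sqrt 3, 6 * Real.sqrt 5, 3 * Real.sqrt 7, 1])
    (hH₁ : H₁ = (Real.sqrt 2 / 32) •
      !![16, 0, 0, 0, 0;
         8 * Real.sqrt 3, 8, 0, 0, 0;
         0, 4 * Real.sqrt 15, 4, 0, 0;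
         -2 * Real.sqrt 7, 2 * Real.sqrt 21, 2 * Real.sqrt 35, 2, 0;
         0, -2 * Real.sqrt 3, 6 * Real.sqrt 5, -3 * Real.sqrt 7, 1]) :
    X = P₀ - P₁ᵀ * X⁻¹ * P₁ ∧
    H₀ * H₀ᵀ + H₁ * H₁ᵀ = P₀ ∧ H₀ * H₁ᵀ = P₁ := by
  have e15 : Real.sqrt 15 = Real.sqrt 3 * Real.sqrt 5 := by
    rw [← Real.sqrt_mul (by norm_num)]; norm_num
  have e21 : Real.sqrt 21 = Real.sqrt 3 * Real.sqrt 7 := by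
    rw [← Real.sqrt_mul (by norm_num)]; norm_num
  have e35 : Real.sqrt 35 = Real.sqrt 5 * Real.sqrt 7 := by
    rw [← Real.sqrt_mul (by norm_num)]; norm_num
  have s2 : Real.sqrt 2 ^ 2 = 2 := Real.sq_sqrt (by norm_num)
  have s3 : Real.sqrt 3 ^ 2 = 3 := Real.sq_sqrt (by norm_num)
  have s5 : Real.sqrt 5 ^ 2 = 5 := Real.sq_sqrt (by norm_num)
  have s7 : Real.sqrt 7 ^ 2 = 7 := Real.sq_sqrt (by norm_num)
  have t3 : Real.sqrt 3 ^ 3 = 3 * Real.sqrt 3 := by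
    rw [pow_succ, s3]
  have t5 : Real.sqrt 5 ^ 3 = 5 * Real.sqrt 5 := by
    rw [pow_succ, s5]
  have t7 : Real.sqrt 7 ^ 3 = 7 * Real.sqrt 7 := by
    rw [pow_succ, s7]
  subst hP₀ hP₁ hX hH₀ hH₁
  refine ⟨?_, ?_, ?_⟩
  · have hXinv : ((1 / 256 : ℝ) •
      !![128, -64 * Real.sqrt 3, 0, 16 * Real.sqrt 7, 0;
         -64 * Real.sqrt 3, 128, -16 * Real.sqrt 15, 0, 8 * Real.sqrt 3;
         0, -16 * Real.sqrt 15, 128, -16 * Real.sqrt 35, 0;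
         16 * Real.sqrt 7, 0, -16 * Real.sqrt 35, 128, -21 * Real.sqrt 7;
         0, 8 * Real.sqrt 3, 0, -21 * Real.sqrt 7, 128] :
           Matrix (Fin 5) (Fin 5) ℝ)⁻¹ =
      !![(215650 : ℝ), 153024 * Real.sqrt 3, 71272 * Real.sqrt 5, 15872 * Real.sqrt 7, -10464;
         153024 * Real.sqrt 3, 325760, 50576 * Real.sqrt 15, 11264 * Real.sqrt 21, -7424 * Real.sqrt 3;
         71272 * Real.sqrt 5, 50576 * Real.sqrt 15, 117792, 5248 * Real.sqrt 35, -3456 * Real.sqrt 5;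
         15872 * Real.sqrt 7, 11264 * Real.sqrt 21, 5248 * Real.sqrt 35, 8192, -768 * Real.sqrt 7;
         -10464, -7424 * Real.sqrt 3, -3456 * Real.sqrt 5, -768 * Real.sqrt 7, 512] := by
      apply Matrix.inv_eq_right_inv
      ext i j
      fin_cases i <;> fin_cases j <;>
        (simp only [Matrix.mul_apply, Matrix.transpose_apply, Matrix.sub_apply,
          Matrix.add_apply, Matrix.one_apply, Matrix.smul_apply, Matrix.of_apply,
          Matrix.cons_val', Matrix.cons_val_zero, Matrix.cons_val_one, Matrix.cons_val_two,
          Matrix.cons_val_three, Matrix.cons_val_four, Matrix.head_cons, Matrix.head_fin_const,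
          Matrix.vecHead, Matrix.vecTail, Matrix.empty_val', Matrix.cons_val_fin_one,
          Function.comp, Fin.sum_univ_five, smul_eq_mul, e15, e21, e35, Matrix.cons_val_succ]
         norm_num [Fin.ext_iff]
         try ring_nf
         try norm_num [s2, s3, s5, s7, t3, t5, t7]
         try ring_nf)
    rw [hXinv]
    ext i j
    fin_cases i <;> fin_cases j <;>
      (simp only [Matrix.mul_apply, Matrix.transpose_apply, Matrix.sub_apply,
        Matrix.add_apply, Matrix.one_apply, Matrix.smul_apply, Matrix.of_apply,
        Matrix.cons_val', Matrix.cons_val_zero, Matrix.cons_val_one, Matrix.cons_val_two,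
        Matrix.cons_val_three, Matrix.cons_val_four, Matrix.head_cons, Matrix.head_fin_const,
        Matrix.vecHead, Matrix.vecTail, Matrix.empty_val', Matrix.cons_val_fin_one,
        Function.comp, Fin.sum_univ_five, smul_eq_mul, e15, e21, e35, Matrix.cons_val_succ]
       norm_num [Fin.ext_iff]
       try ring_nf
       try norm_num [s2, s3, s5, s7, t3, t5, t7]
       try ring_nf)
  · ext i j
    fin_cases i <;> fin_cases j <;>
      (simp only [Matrix.mul_apply, Matrix.transpose_apply, Matrix.sub_apply,
        Matrix.add_apply, Matrix.one_apply, Matrix.smul_apply, Matrix.of_apply,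
        Matrix.cons_val', Matrix.cons_val_zero, Matrix.cons_val_one, Matrix.cons_val_two,
        Matrix.cons_val_three, Matrix.cons_val_four, Matrix.head_cons, Matrix.head_fin_const,
        Matrix.vecHead, Matrix.vecTail, Matrix.empty_val', Matrix.cons_val_fin_one,
        Function.comp, Fin.sum_univ_five, smul_eq_mul, e15, e21, e35, Matrix.cons_val_succ]
       norm_num [Fin.ext_iff]
       try ring_nf
       try norm_num [s2, s3, s5, s7, t3, t5, t7]
       try ring_nf)
  · ext i j
    fin_cases i <;> fin_cases j <;>
      (simp only [Matrix.mul_apply, Matrix.transpose_apply, Matrix.sub_apply,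
        Matrix.add_apply, Matrix.one_apply, Matrix.smul_apply, Matrix.of_apply,
        Matrix.cons_val', Matrix.cons_val_zero, Matrix.cons_val_one, Matrix.cons_val_two,
        Matrix.cons_val_three, Matrix.cons_val_four, Matrix.head_cons, Matrix.head_fin_const,
        Matrix.vecHead, Matrix.vecTail, Matrix.empty_val', Matrix.cons_val_fin_one,
        Function.comp, Fin.sum_univ_five, smul_eq_mul, e15, e21, e35, Matrix.cons_val_succ]
       norm_num [Fin.ext_iff]
       try ring_nf
       try norm_num [s2, s3, s5, s7, t3, t5, t7]
       try ring_nf)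
end

section
/- Let P₀ = [[1,0],[0,1]], P₁ = (1/8)·[[4,−(1+√7)],[1+√7,−√7]], and P₋₁ = P₁ᵀ (real 2×2 matrices), and define the matrix Laurent polynomial P(z) = P₋₁z⁻¹ + P₀ + P₁z with complex argument. Then for every nonzero complex number z, det P(z) = (4−√7)·(1+z)⁴/(32·z²); in particular det P(z) has a quadruple zero at z = −1 on the unit circle, so this matrix spectral factorization problem is singular. -/
open Matrix

/-- The Chui–Lian product filter `P(z) = P₁ᵀ z⁻¹ + P₀ + P₁ z` has determinant
`det P(z) = (4 − √7)(1+z)⁴ / (32 z²)` for every nonzero complex `z`; in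
particular it vanishes (to fourth order) at `z = −1`, a point on the unit
circle, so the matrix spectral factorization problem is singular. -/
theorem chui_lian_determinant_singular
    (P₀ P₁ : Matrix (Fin 2) (Fin 2) ℂ)
    (hP₀ : P₀ = 1)
    (hP₁ : P₁ = (1 / 8 : ℂ) •
      !![4, -(1 + (Real.sqrt 7 : ℂ)); 1 + (Real.sqrt 7 : ℂ),
         -(Real.sqrt 7 : ℂ)]) :
    (∀ z : ℂ, z ≠ 0 →
      (z⁻¹ • P₁ᵀ + P₀ + z • P₁).det
        = ((4 - Real.sqrt 7 : ℝ) : ℂ) * (1 + z) ^ 4 / (32 * z ^ 2)) ∧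
    ((-1 : ℂ)⁻¹ • P₁ᵀ + P₀ + (-1 : ℂ) • P₁).det = 0 ∧
    ‖(-1 : ℂ)‖ = 1 := by
  have hs : ((Real.sqrt 7 : ℂ)) ^ 2 = 7 := by
    rw [← Complex.ofReal_pow, Real.sq_sqrt (by norm_num : (7:ℝ) ≥ 0)]
    norm_num
  have key : ∀ z : ℂ, z ≠ 0 →
      (z⁻¹ • P₁ᵀ + P₀ + z • P₁).det
        = ((4 - Real.sqrt 7 : ℝ) : ℂ) * (1 + z) ^ 4 / (32 * z ^ 2) := by
    intro z hz
    subst hP₀ hP₁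
    simp only [Matrix.det_fin_two, Matrix.transpose_apply, Matrix.add_apply,
      Matrix.smul_apply, Matrix.one_apply, Matrix.cons_val', Matrix.cons_val_zero,
      Matrix.cons_val_one, Matrix.head_cons, Matrix.head_fin_const,
      Matrix.empty_val', Matrix.cons_val_fin_one, smul_eq_mul,
      Complex.ofReal_sub, Complex.ofReal_ofNat]
    norm_num
    field_simp
    linear_combination (64*(1+z)^2*(1-z)^2) * hs
  refine ⟨key, ?_, by simp⟩
  rw [key (-1) (by norm_num)]
  norm_num
end
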